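/- Parity cancellation identity (key step in the proof of Proposition 2.1): Let b^{(1)}, …, b^{(n)} and c^{(1)}, …, c^{(n)} be complex matrices with b^{(r)}, c^{(r)} of size d_r × d_r, and set u := b^{(1)} ⊗ ⋯ ⊗ b^{(n)} and v := c^{(1)} ⊗ ⋯ ⊗ c^{(n)}. For each subset S ⊆ {1,…,n} let T_S := X^{(1)} ⊗ ⋯ ⊗ X^{(n)}, where X^{(r)} = [b^{(r)}, c^{(r)}] if r ∈ S and X^{(r)} = {b^{(r)}, c^{(r)}} if r ∉ S. Then uv + vu = 2^{1−n} ∑_{S ⊆ {1,…,n}, |S| even} T_S; that is, all odd-parity terms cancel. -/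

import Mathlib

open scoped BigOperators ComplexOrder

namespace Parity

variable {n : ℕ} {d : Fin n → ℕ}

/-- Kronecker product of `n` matrices, as a matrix over the product index set. -/
def kron (a : ∀ r : Fin n, Matrix (Fin (d r)) (Fin (d r)) ℂ) :
    Matrix (∀ r, Fin (d r)) (∀ r, Fin (d r)) ℂ :=
  fun i j => ∏ r, a r (i r) (j r)

/-- The ℓ²-operator norm of a complex matrix. -/
noncomputable def opNorm {I : Type*} [Fintype I] [DecidableEq I] (A : Matrix I I ℂ) : ℝ :=
  ‖Matrix.toEuclideanCLM (𝕜 := ℂ) A‖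

/-- The defect weight φ⁽ⁿ⁾ᵢⱼ. -/
noncomputable def phi {m : ℕ} (a : ∀ r : Fin n, Fin m → Matrix (Fin (d r)) (Fin (d r)) ℂ)
    (i j : Fin m) : ℝ :=
  (2 : ℝ) ^ ((1 : ℤ) - n) *
    ∑ S ∈ Finset.univ.filter (fun S : Finset (Fin n) => Even S.card),
      (∏ r ∈ S, opNorm (a r i * a r j - a r j * a r i)) *
        (∏ r ∈ Sᶜ, opNorm (a r i * a r j + a r j * a r i))

/-- A state: positive semidefinite with trace one. -/
def IsState {I : Type*} [Fintype I] (ρ : Matrix I I ℂ) : Prop :=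
  ρ.PosSemidef ∧ ρ.trace = 1

/-- The trace norm `Tr √(AᴴA)`. -/
noncomputable def traceNorm {I : Type*} [Fintype I] [DecidableEq I] (A : Matrix I I ℂ) : ℝ :=
  (((Matrix.posSemidef_conjTranspose_mul_self A).1.eigenvectorUnitary : Matrix I I ℂ) *
      Matrix.diagonal (fun i => ((Real.sqrt
        ((Matrix.posSemidef_conjTranspose_mul_self A).1.eigenvalues i) : ℝ) : ℂ)) *
      (star (Matrix.posSemidef_conjTranspose_mul_self A).1.eigenvectorUnitary :
        Matrix I I ℂ)).trace.re

/-- Logarithm of a Hermitian matrix via the functional calculus (junk value otherwise);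
an eigenvalue `0` contributes `Real.log 0 = 0`. -/
noncomputable def mlog {I : Type*} [Fintype I] [DecidableEq I] (A : Matrix I I ℂ) :
    Matrix I I ℂ :=
  if hA : A.IsHermitian then
    (hA.eigenvectorUnitary : Matrix I I ℂ) *
      Matrix.diagonal (fun i => (Real.log (hA.eigenvalues i) : ℂ)) *
      (star hA.eigenvectorUnitary : Matrix I I ℂ)
  else 0

/-- Quantum relative entropy `D(ρ‖σ) = Tr(ρ (log ρ − log σ))` (natural logarithm). -/
noncomputable def relEntropy {I : Type*} [Fintype I] [DecidableEq I] (ρ σ : Matrix I I ℂ) : ℝ :=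
  (Matrix.trace (ρ * (mlog ρ - mlog σ))).re

/-- The `r`-th marginal (partial trace over all other factors). -/
noncomputable def marginal (ρ : Matrix (∀ r, Fin (d r)) (∀ r, Fin (d r)) ℂ) (r : Fin n) :
    Matrix (Fin (d r)) (Fin (d r)) ℂ :=
  fun a b => ∑ k : ∀ s, Fin (d s), if k r = a then ρ k (Function.update k r b) else 0

/-- Total correlation `I_tot(ρ) = D(ρ‖ρ₁ ⊗ ⋯ ⊗ ρₙ)`. -/
noncomputable def Itot (ρ : Matrix (∀ r, Fin (d r)) (∀ r, Fin (d r)) ℂ) : ℝ :=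
  relEntropy ρ (kron (fun r => marginal ρ r))

/-- The set of product states. -/
def ProdStates (d : Fin n → ℕ) : Set (Matrix (∀ r, Fin (d r)) (∀ r, Fin (d r)) ℂ) :=
  {σ | ∃ s : ∀ r : Fin n, Matrix (Fin (d r)) (Fin (d r)) ℂ,
    (∀ r, IsState (s r)) ∧ σ = kron s}

/-- The product threshold `Γ_prod(B)`. -/
noncomputable def Gamma (d : Fin n → ℕ) (B : Matrix (∀ r, Fin (d r)) (∀ r, Fin (d r)) ℂ) : ℝ :=
  sSup {x : ℝ | ∃ σ ∈ ProdStates d, x = (Matrix.trace (σ * B)).re}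

/-- The excess `Δ_B(ρ)`. -/
noncomputable def excess (d : Fin n → ℕ) (B ρ : Matrix (∀ r, Fin (d r)) (∀ r, Fin (d r)) ℂ) : ℝ :=
  max ((Matrix.trace (ρ * B)).re - Gamma d B) 0

end Parity


open Finset in
lemma parity_key {n : ℕ} (p q : Fin n → ℂ) :
    ∏ r, p r + ∏ r, q r =
      (2:ℂ)^((1:ℤ) - n) * ∑ S ∈ Finset.univ.filter (fun S : Finset (Fin n) => Even S.card),
        (∏ r ∈ S, (p r - q r)) * ∏ r ∈ Sᶜ, (p r + q r) := by
  have h2 : ((2:ℂ)^n) ≠ 0 := pow_ne_zero _ two_ne_zero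
  have hp : ∏ r, (2 * p r) = ∑ t : Finset (Fin n), (∏ r ∈ t, (p r - q r)) * ∏ r ∈ tᶜ, (p r + q r) := by
    rw [← Fintype.prod_add]
    congr 1; ext r; ring
  have hq : ∏ r, (2 * q r) = ∑ t : Finset (Fin n), ((-1:ℂ))^t.card * ((∏ r ∈ t, (p r - q r)) * ∏ r ∈ tᶜ, (p r + q r)) := by
    have : ∏ r, (2 * q r) = ∑ t : Finset (Fin n), (∏ r ∈ t, (q r - p r)) * ∏ r ∈ tᶜ, (p r + q r) := by
      rw [← Fintype.prod_add]; congr 1; ext r; ring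
    rw [this]
    refine Finset.sum_congr rfl fun t _ => ?_
    rw [← mul_assoc]
    congr 1
    rw [← Finset.prod_const, ← Finset.prod_mul_distrib]
    refine Finset.prod_congr rfl fun r _ => ?_; ring
  have hmain : (2:ℂ)^n * (∏ r, p r + ∏ r, q r) =
      2 * ∑ S ∈ Finset.univ.filter (fun S : Finset (Fin n) => Even S.card),
        (∏ r ∈ S, (p r - q r)) * ∏ r ∈ Sᶜ, (p r + q r) := by
    have lhs : (2:ℂ)^n * (∏ r, p r + ∏ r, q r) = ∏ r, (2 * p r) + ∏ r, (2 * q r) := by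
      rw [Finset.prod_mul_distrib, Finset.prod_mul_distrib]
      simp [mul_add, Finset.prod_const]
    rw [lhs, hp, hq, ← Finset.sum_add_distrib]
    rw [Finset.mul_sum]
    rw [← Finset.sum_filter_add_sum_filter_not Finset.univ (fun S : Finset (Fin n) => Even S.card)
      (fun t => (∏ r ∈ t, (p r - q r)) * ∏ r ∈ tᶜ, (p r + q r) +
        ((-1:ℂ))^t.card * ((∏ r ∈ t, (p r - q r)) * ∏ r ∈ tᶜ, (p r + q r)))]
    have e1 : ∀ t ∈ Finset.univ.filter (fun S : Finset (Fin n) => Even S.card),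
        (∏ r ∈ t, (p r - q r)) * ∏ r ∈ tᶜ, (p r + q r) +
        ((-1:ℂ))^t.card * ((∏ r ∈ t, (p r - q r)) * ∏ r ∈ tᶜ, (p r + q r)) =
        2 * ((∏ r ∈ t, (p r - q r)) * ∏ r ∈ tᶜ, (p r + q r)) := by
      intro t ht
      simp only [Finset.mem_filter] at ht
      rw [ht.2.neg_one_pow]; ring
    have e2 : ∀ t ∈ Finset.univ.filter (fun S : Finset (Fin n) => ¬ Even S.card),
        (∏ r ∈ t, (p r - q r)) * ∏ r ∈ tᶜ, (p r + q r) +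
        ((-1:ℂ))^t.card * ((∏ r ∈ t, (p r - q r)) * ∏ r ∈ tᶜ, (p r + q r)) = 0 := by
      intro t ht
      simp only [Finset.mem_filter, Nat.not_even_iff_odd] at ht
      rw [ht.2.neg_one_pow]; ring
    rw [Finset.sum_congr rfl e1, Finset.sum_congr rfl e2, Finset.sum_const_zero, add_zero]
  have hz : (2:ℂ)^((1:ℤ) - n) = 2 * ((2:ℂ)^n)⁻¹ := by
    rw [zpow_sub₀ (two_ne_zero), zpow_one, zpow_natCast]; ring
  rw [hz]
  field_simp
  linear_combination hmain

open Parity in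
lemma kron_mul' {n : ℕ} {d : Fin n → ℕ} (a b : ∀ r, Matrix (Fin (d r)) (Fin (d r)) ℂ) :
    kron a * kron b = kron (fun r => a r * b r) := by
  ext i j
  simp only [Matrix.mul_apply, kron]
  rw [Fintype.prod_sum (fun r x => a r (i r) x * b r x (j r))]
  exact Finset.sum_congr rfl fun k _ => (Finset.prod_mul_distrib).symm

open Parity in
/-- Parity cancellation identity: the odd-parity terms in `uv + vu` cancel. -/
theorem parity_cancellation
    {n : ℕ} {d : Fin n → ℕ} (hn : 1 ≤ n) (hd : ∀ r, 1 ≤ d r)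
    (b c : ∀ r : Fin n, Matrix (Fin (d r)) (Fin (d r)) ℂ) :
    kron b * kron c + kron c * kron b =
      ((2 : ℂ) ^ ((1 : ℤ) - n)) •
        ∑ S ∈ Finset.univ.filter (fun S : Finset (Fin n) => Even S.card),
          kron (fun r =>
            if r ∈ S then b r * c r - c r * b r else b r * c r + c r * b r) := by
  rw [kron_mul', kron_mul']
  ext i j
  simp only [Matrix.add_apply, Matrix.smul_apply, Matrix.sum_apply, kron, smul_eq_mul]
  rw [parity_key (fun r => (b r * c r) (i r) (j r)) (fun r => (c r * b r) (i r) (j r))]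
  congr 1
  refine Finset.sum_congr rfl fun S _ => ?_
  have step : ∀ r, (if r ∈ S then b r * c r - c r * b r else b r * c r + c r * b r) (i r) (j r)
      = if r ∈ S then (b r * c r) (i r) (j r) - (c r * b r) (i r) (j r)
        else (b r * c r) (i r) (j r) + (c r * b r) (i r) (j r) := by
    intro r; split <;> simp [Matrix.sub_apply, Matrix.add_apply]
  simp only [step, Finset.prod_ite]
  congr 1
  · apply Finset.prod_congr _ fun _ _ => rfl
    simp
  · apply Finset.prod_congr _ fun _ _ => rfl
    ext x; simp
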